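/- Given nonnegative integers i_1,...,i_m, positive integers s_1,...,s_m and r with ⌊i_1/s_1⌋ + ... + ⌊i_m/s_m⌋ ≥ r, and finite sets S_j ⊆ F with |S_j| = s_j, there exists a polynomial F ∈ F[X_1,...,X_m] with leading monomial X_1^{i_1}⋯X_m^{i_m} (with respect to any monomial ordering) such that every point of S_1 × ... × S_m is a zero of F of multiplicity at least r. -/

import Mathlib

/-- The `k`-th Hasse derivative of a multivariate polynomial `f`: the coefficient of
`T^k` in `f(X + T)`. -/
noncomputable def hasseDeriv {F : Type*} [CommRing F] {m : ℕ} (k : Fin m →₀ ℕ)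
    (f : MvPolynomial (Fin m) F) : MvPolynomial (Fin m) F :=
  MvPolynomial.coeff k
    (MvPolynomial.eval₂ (MvPolynomial.C.comp MvPolynomial.C)
      (fun j => MvPolynomial.X j + MvPolynomial.C (MvPolynomial.X j)) f)

/-- `f` has multiplicity at least `r` at the point `a`: all Hasse derivatives of total
order `< r` vanish at `a`. -/
def HasMultAtLeast {F : Type*} [CommRing F] {m : ℕ} (f : MvPolynomial (Fin m) F)
    (a : Fin m → F) (r : ℕ) : Prop :=
  ∀ k : Fin m →₀ ℕ, (∑ j, k j) < r → MvPolynomial.eval a (hasseDeriv k f) = 0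

/-- The multiplicity of `f` at `a`: the largest `r` such that all Hasse derivatives of `f`
of total order `< r` vanish at `a`. -/
noncomputable def multAt {F : Type*} [CommRing F] {m : ℕ} (f : MvPolynomial (Fin m) F)
    (a : Fin m → F) : ℕ :=
  sSup {r | HasMultAtLeast f a r}

section Helpers

variable {F : Type*} [CommRing F] {m : ℕ}

/-- All monomials of `p` have total degree at least `r`. -/
def MinDeg (r : ℕ) (p : MvPolynomial (Fin m) F) : Prop :=
  ∀ k : Fin m →₀ ℕ, (∑ j, k j) < r → MvPolynomial.coeff k p = 0

lemma MinDeg.zero (p : MvPolynomial (Fin m) F) : MinDeg 0 p :=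
  fun _ hk => absurd hk (Nat.not_lt_zero _)

lemma MinDeg.mono {r s : ℕ} (h : r ≤ s) {p : MvPolynomial (Fin m) F} (hp : MinDeg s p) :
    MinDeg r p := fun k hk => hp k (lt_of_lt_of_le hk h)

lemma MinDeg.mul {r s : ℕ} {p q : MvPolynomial (Fin m) F} (hp : MinDeg r p) (hq : MinDeg s q) :
    MinDeg (r + s) (p * q) := by
  classical
  intro k hk
  rw [MvPolynomial.coeff_mul]
  apply Finset.sum_eq_zero
  rintro ⟨u, v⟩ huv
  rw [Finset.HasAntidiagonal.mem_antidiagonal] at huv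
  have hsum : (∑ j, u j) + (∑ j, v j) = ∑ j, k j := by
    rw [← Finset.sum_add_distrib]; exact Finset.sum_congr rfl fun j _ => by
      rw [← huv]; rfl
  rcases lt_or_ge (∑ j, u j) r with h1 | h1
  · rw [hp u h1, zero_mul]
  · have : (∑ j, v j) < s := by omega
    rw [hq v this, mul_zero]

lemma MinDeg.pow {p : MvPolynomial (Fin m) F} (hp : MinDeg 1 p) (n : ℕ) : MinDeg n (p ^ n) := by
  induction n with
  | zero => exact MinDeg.zero _
  | succ n ih => rw [pow_succ]; exact MinDeg.mul ih hp

lemma MinDeg.prod {s : Finset (Fin m)} {e : Fin m → ℕ} {q : Fin m → MvPolynomial (Fin m) F}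
    (h : ∀ j ∈ s, MinDeg (e j) (q j)) : MinDeg (∑ j ∈ s, e j) (∏ j ∈ s, q j) := by
  classical
  induction s using Finset.induction with
  | empty => simpa using MinDeg.zero _
  | insert a t hji ih =>
    rw [Finset.sum_insert hji, Finset.prod_insert hji]
    exact MinDeg.mul (h a (Finset.mem_insert_self a t))
      (ih fun j hj => h j (Finset.mem_insert_of_mem hj))

lemma MinDeg.one_X (j : Fin m) : MinDeg 1 (MvPolynomial.X (R := F) j) := by
  intro k hk
  have hk0 : k = 0 := by
    ext j'
    have := Finset.sum_eq_zero_iff.mp (Nat.lt_one_iff.mp hk) j' (Finset.mem_univ _)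
    simpa using this
  subst hk0
  simp [MvPolynomial.coeff_zero_X]

/-- The shift `f(X + a)` as an algebra hom. -/
noncomputable def shiftHom (a : Fin m → F) :
    MvPolynomial (Fin m) F →ₐ[F] MvPolynomial (Fin m) F :=
  MvPolynomial.aeval (fun j => MvPolynomial.X j + MvPolynomial.C (a j))

lemma eval_hasseDeriv (a : Fin m → F) (k : Fin m →₀ ℕ) (f : MvPolynomial (Fin m) F) :
    MvPolynomial.eval a (hasseDeriv k f) = MvPolynomial.coeff k (shiftHom a f) := by
  set Φ : MvPolynomial (Fin m) F →+* MvPolynomial (Fin m) (MvPolynomial (Fin m) F) :=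
    MvPolynomial.eval₂Hom (MvPolynomial.C.comp MvPolynomial.C)
      (fun j => MvPolynomial.X j + MvPolynomial.C (MvPolynomial.X j)) with hΦ
  have h1 : hasseDeriv k f = MvPolynomial.coeff k (Φ f) := rfl
  rw [h1, ← MvPolynomial.coeff_map]
  congr 1
  have : (MvPolynomial.map (MvPolynomial.eval a)).comp Φ = (shiftHom a).toRingHom := by
    apply MvPolynomial.ringHom_ext
    · intro c
      simp [hΦ, shiftHom]
    · intro j
      simp [hΦ, shiftHom]
  exact congrFun (congrArg (fun g : _ →+* _ => (g : MvPolynomial (Fin m) F → _)) this) f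

lemma aeval_X_eq_sum (j : Fin m) (p : Polynomial F) :
    Polynomial.aeval (MvPolynomial.X (R := F) j) p
      = ∑ d ∈ p.support, MvPolynomial.monomial (Finsupp.single j d) (p.coeff d) := by
  rw [Polynomial.aeval_def, Polynomial.eval₂_eq_sum, Polynomial.sum]
  refine Finset.sum_congr rfl fun d _ => ?_
  rw [← MvPolynomial.C_mul_X_pow_eq_monomial]
  rfl

lemma coeff_aeval_single (j : Fin m) (p : Polynomial F) (n : ℕ) :
    MvPolynomial.coeff (Finsupp.single j n) (Polynomial.aeval (MvPolynomial.X (R := F) j) p)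
      = p.coeff n := by
  classical
  rw [aeval_X_eq_sum]
  rw [MvPolynomial.coeff_sum]
  simp only [MvPolynomial.coeff_monomial]
  by_cases hn : n ∈ p.support
  · rw [Finset.sum_eq_single_of_mem n hn]
    · simp
    · intro d _ hd
      rw [if_neg]
      intro hsd
      exact hd (Finsupp.single_injective j hsd)
  · rw [Polynomial.notMem_support_iff.mp hn]
    apply Finset.sum_eq_zero
    intro d hd
    rw [if_neg]
    intro hsd
    have : d = n := by
      have := congrArg (fun g : Fin m →₀ ℕ => g j) hsd
      simpa using this
    exact hn (this ▸ hd)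

lemma support_aeval (j : Fin m) (p : Polynomial F) {k : Fin m →₀ ℕ}
    (hk : k ∈ (Polynomial.aeval (MvPolynomial.X (R := F) j) p).support) :
    ∃ d ∈ p.support, k = Finsupp.single j d := by
  classical
  rw [aeval_X_eq_sum] at hk
  have := MvPolynomial.support_sum hk
  simp only [Finset.mem_biUnion] at this
  obtain ⟨d, hd, hk2⟩ := this
  exact ⟨d, hd, by
    have := MvPolynomial.support_monomial_subset hk2
    simpa using this⟩

lemma prod_support_le (D : Fin m → ℕ) (q : Fin m → MvPolynomial (Fin m) F)
    (hq : ∀ j, ∀ k ∈ (q j).support, ∃ d ≤ D j, k = Finsupp.single j d)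
    (s : Finset (Fin m)) :
    ∀ k ∈ (∏ j ∈ s, q j).support, ∀ j, k j ≤ if j ∈ s then D j else 0 := by
  classical
  induction s using Finset.induction with
  | empty =>
    intro k hk j
    simp only [Finset.prod_empty] at hk
    have : k = 0 := by
      by_contra h
      rw [MvPolynomial.mem_support_iff, MvPolynomial.coeff_one, if_neg (Ne.symm h)] at hk
      exact hk rfl
    simp [this]
  | insert a t hat ih =>
    intro k hk j
    rw [Finset.prod_insert hat] at hk
    have := MvPolynomial.support_mul _ _ hk
    rw [Finset.mem_add] at this
    obtain ⟨u, hu, v, hv, huv⟩ := this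
    obtain ⟨d, hd, hud⟩ := hq a u hu
    have hvj := ih v hv
    subst huv hud
    rcases eq_or_ne j a with rfl | hja
    · have : v j ≤ 0 := by simpa [hat] using hvj j
      simp only [Finsupp.coe_add, Pi.add_apply, Finsupp.single_eq_same]
      rw [if_pos (Finset.mem_insert_self _ _)]
      omega
    · have h1 : Finsupp.single a d j = 0 := Finsupp.single_eq_of_ne hja
      have h2 := hvj j
      simp only [Finsupp.coe_add, Pi.add_apply, h1, zero_add]
      by_cases hjt : j ∈ t <;> simp [hjt, hja] at h2 ⊢ <;> omega

lemma prod_coeff (D : Fin m → ℕ) (q : Fin m → MvPolynomial (Fin m) F)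
    (hq : ∀ j, ∀ k ∈ (q j).support, ∃ d ≤ D j, k = Finsupp.single j d)
    (s : Finset (Fin m)) :
    MvPolynomial.coeff (∑ j ∈ s, Finsupp.single j (D j)) (∏ j ∈ s, q j)
      = ∏ j ∈ s, MvPolynomial.coeff (Finsupp.single j (D j)) (q j) := by
  classical
  induction s using Finset.induction with
  | empty => simp
  | insert a t hat ih =>
    rw [Finset.prod_insert hat, Finset.prod_insert hat, Finset.sum_insert hat,
      MvPolynomial.coeff_mul]
    set T : Fin m →₀ ℕ := ∑ j ∈ t, Finsupp.single j (D j) with hT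
    have hTa : T a = 0 := by
      rw [hT, Finsupp.finset_sum_apply]
      apply Finset.sum_eq_zero
      intro j hj
      exact Finsupp.single_eq_of_ne (fun h => hat (h ▸ hj))
    rw [Finset.sum_eq_single_of_mem (Finsupp.single a (D a), T)]
    · rw [ih]
    · rw [Finset.HasAntidiagonal.mem_antidiagonal]
    · rintro ⟨u, v⟩ huv hne
      rw [Finset.HasAntidiagonal.mem_antidiagonal] at huv
      by_contra hzero
      have hu : u ∈ (q a).support := by
        rw [MvPolynomial.mem_support_iff]; intro h; exact hzero (by rw [h, zero_mul])
      have hv : v ∈ (∏ j ∈ t, q j).support := by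
        rw [MvPolynomial.mem_support_iff]; intro h; exact hzero (by rw [h, mul_zero])
      obtain ⟨d, hd, hud⟩ := hq a u hu
      have hva : v a = 0 := by
        have := prod_support_le D q hq t v hv a
        simpa [hat] using this
      have hKa : u a + v a = D a + T a := by
        have := congrArg (fun g : Fin m →₀ ℕ => g a) huv
        simpa using this
      have hda : d = D a := by
        rw [hud] at hKa
        simpa [hva, hTa] using hKa
      subst hda hud
      have hvT : v = T := add_left_cancel huv
      apply hne
      rw [hvT]

end Helpers

/-- If `⌊i_1/s_1⌋ + ⋯ + ⌊i_m/s_m⌋ ≥ r`, then there is a polynomial with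
leading monomial `X_1^{i_1} ⋯ X_m^{i_m}` with respect to any monomial ordering, all of whose
points in `S_1 × ⋯ × S_m` are zeros of multiplicity at least `r`. -/
theorem exists_poly_all_points_high_multiplicity {F : Type*} [Field F] {m : ℕ}
    (i : Fin m →₀ ℕ) (S : Fin m → Finset F) (hS : ∀ j, 0 < (S j).card)
    (r : ℕ) (hr : 1 ≤ r) (h : r ≤ ∑ j, i j / (S j).card) :
    ∃ f : MvPolynomial (Fin m) F, f ≠ 0 ∧ MvPolynomial.coeff i f ≠ 0 ∧
      (∀ mo : MonomialOrder (Fin m), ∀ j ∈ f.support, mo.toSyn j ≤ mo.toSyn i) ∧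
      ∀ a ∈ Fintype.piFinset S, HasMultAtLeast f a r := by
  classical
  set e : Fin m → ℕ := fun j => i j / (S j).card with he
  set rem : Fin m → ℕ := fun j => i j % (S j).card with hrem
  set p : Fin m → Polynomial F :=
    fun j => (∏ b ∈ S j, (Polynomial.X - Polynomial.C b)) ^ e j * Polynomial.X ^ rem j with hp
  have hpmonic : ∀ j, (p j).Monic := fun j =>
    (((Polynomial.monic_prod_of_monic _ _ fun b _ => Polynomial.monic_X_sub_C b).pow _).mul
      (Polynomial.monic_X_pow _))
  have hpdeg : ∀ j, (p j).natDegree = i j := by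
    intro j
    have h1 : (∏ b ∈ S j, (Polynomial.X - Polynomial.C b)).natDegree = (S j).card := by
      rw [Polynomial.natDegree_prod _ _ fun b _ => Polynomial.X_sub_C_ne_zero b]
      simp [Polynomial.natDegree_X_sub_C]
    rw [hp]
    rw [Polynomial.Monic.natDegree_mul
      ((Polynomial.monic_prod_of_monic _ _ fun b _ => Polynomial.monic_X_sub_C b).pow _)
      (Polynomial.monic_X_pow _), Polynomial.natDegree_pow, h1, Polynomial.natDegree_X_pow]
    simp only [he, hrem]
    exact Nat.div_add_mod' _ _
  set q : Fin m → MvPolynomial (Fin m) F :=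
    fun j => Polynomial.aeval (MvPolynomial.X j) (p j) with hq
  have hqsupp : ∀ j, ∀ k ∈ (q j).support, ∃ d ≤ i j, k = Finsupp.single j d := by
    intro j k hk
    obtain ⟨d, hd, hkd⟩ := support_aeval j (p j) hk
    exact ⟨d, (hpdeg j) ▸ Polynomial.le_natDegree_of_mem_supp d hd, hkd⟩
  refine ⟨∏ j, q j, ?_, ?_, ?_, ?_⟩
  case refine_2 =>
    have hi : i = ∑ j, Finsupp.single j (i j) := (Finsupp.univ_sum_single i).symm
    rw [hi, prod_coeff (fun j => i j) q hqsupp]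
    have : ∀ j ∈ Finset.univ,
        MvPolynomial.coeff (Finsupp.single j (i j)) (q j) = 1 := by
      intro j _
      rw [hq, coeff_aeval_single, ← hpdeg j]
      exact (hpmonic j).coeff_natDegree
    rw [Finset.prod_congr rfl this]
    simp
  case refine_1 =>
    intro hzero
    have hi : i = ∑ j, Finsupp.single j (i j) := (Finsupp.univ_sum_single i).symm
    have : MvPolynomial.coeff i (∏ j, q j) = 1 := by
      rw [hi, prod_coeff (fun j => i j) q hqsupp]
      have : ∀ j ∈ Finset.univ,
          MvPolynomial.coeff (Finsupp.single j (i j)) (q j) = 1 := by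
        intro j _
        rw [hq, coeff_aeval_single, ← hpdeg j]
        exact (hpmonic j).coeff_natDegree
      rw [Finset.prod_congr rfl this]
      simp
    rw [hzero] at this
    simp at this
  case refine_3 =>
    intro mo k hk
    apply mo.toSyn_monotone
    intro j
    have := prod_support_le (fun j => i j) q hqsupp Finset.univ k hk j
    simpa using this
  case refine_4 =>
    intro a ha
    intro k hk
    rw [eval_hasseDeriv]
    have hmem : ∀ j, a j ∈ S j := by
      intro j
      exact (Fintype.mem_piFinset.mp ha) j
    have key : MinDeg (∑ j, e j) (shiftHom a (∏ j, q j)) := by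
      rw [map_prod]
      apply MinDeg.prod
      intro j _
      have hshift : shiftHom a (q j) = Polynomial.aeval
          (MvPolynomial.X j + MvPolynomial.C (a j)) (p j) := by
        rw [hq]
        rw [← Polynomial.aeval_algHom_apply]
        congr 1
        simp [shiftHom]
      rw [hshift, hp, map_mul, map_pow, map_prod]
      have hfac : ∀ b ∈ S j, (Polynomial.aeval
          (MvPolynomial.X j + MvPolynomial.C (a j)))
            (Polynomial.X - Polynomial.C b)
          = MvPolynomial.X j + MvPolynomial.C (a j) - MvPolynomial.C b := by
        intro b _
        simp [MvPolynomial.algebraMap_eq]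
      rw [Finset.prod_congr rfl hfac]
      have hone : MinDeg 1 (∏ b ∈ S j,
          (MvPolynomial.X (R := F) j + MvPolynomial.C (a j) - MvPolynomial.C b)) := by
        rw [← Finset.mul_prod_erase _ _ (hmem j)]
        have hXj : MvPolynomial.X (R := F) j + MvPolynomial.C (a j) - MvPolynomial.C (a j)
            = MvPolynomial.X j := by ring
        rw [hXj]
        have := MinDeg.mul (MinDeg.one_X (F := F) j) (MinDeg.zero
          (∏ b ∈ (S j).erase (a j),
            (MvPolynomial.X (R := F) j + MvPolynomial.C (a j) - MvPolynomial.C b)))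
        simpa using this
      have := MinDeg.mul (hone.pow (e j)) (MinDeg.zero
        ((Polynomial.aeval (MvPolynomial.X (R := F) j + MvPolynomial.C (a j)))
          ((Polynomial.X : Polynomial F) ^ rem j)))
      simpa using this
    exact (key.mono h) k hk
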